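/- Let n ≥ 3 and let a₁, …, aₙ ≥ 2 be integers. Define α_i = a / lcm(a_j : j ≠ i) where a = lcm(a₁,…,aₙ), s_i = (Π_{j≠i} a_j)/lcm(a_j : j ≠ i), and g = (1/2)(2 + (n−2)·(Π a_j)/a − Σ_i s_i). Suppose d_{ijk} := gcd(a_i,a_j,a_k) = 1 for all triples of distinct indices, and g = 0. Then, writing d_{ik} = gcd(a_i,a_k) for i ≠ k, the integers d_{ik} satisfy: 2 + (n−2)·Π_{i<k} d_{ik} − Σ_{j=1}^n Π_{i<k, i,k≠j} d_{ik} = 0. -/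

import Mathlib

open Finset

private lemma gcd_lcm_distrib' (x m n : ℕ) (hx : x ≠ 0) (hm : m ≠ 0) (hn : n ≠ 0) :
    Nat.gcd x (Nat.lcm m n) = Nat.lcm (Nat.gcd x m) (Nat.gcd x n) := by
  have h1 : Nat.gcd x (Nat.lcm m n) ≠ 0 := fun h => hx (Nat.eq_zero_of_gcd_eq_zero_left h)
  have hgm : Nat.gcd x m ≠ 0 := fun h => hx (Nat.eq_zero_of_gcd_eq_zero_left h)
  have hgn : Nat.gcd x n ≠ 0 := fun h => hx (Nat.eq_zero_of_gcd_eq_zero_left h)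
  have h2 : Nat.lcm (Nat.gcd x m) (Nat.gcd x n) ≠ 0 := Nat.lcm_ne_zero hgm hgn
  apply Nat.factorization_inj h1 h2
  rw [Nat.factorization_gcd hx (Nat.lcm_ne_zero hm hn), Nat.factorization_lcm hm hn,
    Nat.factorization_lcm hgm hgn, Nat.factorization_gcd hx hm, Nat.factorization_gcd hx hn]
  ext p
  simp [Finsupp.inf_apply, Finsupp.sup_apply, min_max_distrib_left]

private lemma finset_lcm_ne_zero {ι : Type*} [DecidableEq ι] (S : Finset ι) (f : ι → ℕ)
    (hf : ∀ i ∈ S, f i ≠ 0) : S.lcm f ≠ 0 := by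
  induction S using Finset.induction_on with
  | empty => simp [Finset.lcm_empty]
  | insert _ _ hx ih =>
    rw [Finset.lcm_insert]
    exact Nat.lcm_ne_zero (hf _ (mem_insert_self _ _))
      (ih fun i hi => hf i (mem_insert_of_mem hi))

private lemma gcd_finset_lcm {ι : Type*} [DecidableEq ι] (x : ℕ) (hx : x ≠ 0)
    (S : Finset ι) (f : ι → ℕ) (hf : ∀ i ∈ S, f i ≠ 0)
    (hcop : ∀ i ∈ S, ∀ j ∈ S, i ≠ j → Nat.Coprime (Nat.gcd x (f i)) (Nat.gcd x (f j))) :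
    Nat.gcd x (S.lcm f) = ∏ i ∈ S, Nat.gcd x (f i) := by
  induction S using Finset.induction_on with
  | empty => simp [Nat.gcd_one_right]
  | @insert y S hy ih =>
    rw [Finset.lcm_insert, Finset.prod_insert hy, lcm_eq_nat_lcm]
    have hfy : f y ≠ 0 := hf _ (mem_insert_self _ _)
    have hfS : ∀ i ∈ S, f i ≠ 0 := fun i hi => hf i (mem_insert_of_mem hi)
    rw [gcd_lcm_distrib' x (f y) (S.lcm f) hx hfy (finset_lcm_ne_zero S f hfS),
      ih hfS (fun i hi j hj hij => hcop i (mem_insert_of_mem hi) j (mem_insert_of_mem hj) hij)]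
    apply Nat.Coprime.lcm_eq_mul
    apply Nat.Coprime.prod_right
    intro i hi
    exact hcop y (mem_insert_self _ _) i (mem_insert_of_mem hi) (fun h => hy (h ▸ hi))

private lemma pair_insert {ι : Type*} [LinearOrder ι] (f : ι → ℕ)
    (x : ι) (S : Finset ι) (hx : x ∉ S) :
    (∏ i ∈ insert x S, ∏ j ∈ (insert x S).filter (fun j => i < j), Nat.gcd (f i) (f j))
      = (∏ i ∈ S, Nat.gcd (f x) (f i)) *
        ∏ i ∈ S, ∏ j ∈ S.filter (fun j => i < j), Nat.gcd (f i) (f j) := by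
  rw [Finset.prod_insert hx]
  have h1 : (insert x S).filter (fun j => x < j) = S.filter (fun j => x < j) := by
    rw [Finset.filter_insert, if_neg (lt_irrefl x)]
  have h2 : ∀ i ∈ S, (∏ j ∈ (insert x S).filter (fun j => i < j), Nat.gcd (f i) (f j))
      = (if i < x then Nat.gcd (f i) (f x) else 1) *
        ∏ j ∈ S.filter (fun j => i < j), Nat.gcd (f i) (f j) := by
    intro i hi
    rw [Finset.filter_insert]
    by_cases h : i < x
    · rw [if_pos h, if_pos h, Finset.prod_insert (fun hc => hx (Finset.mem_of_mem_filter _ hc))]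
    · rw [if_neg h, if_neg h, one_mul]
  rw [Finset.prod_congr rfl h2, Finset.prod_mul_distrib, h1, ← mul_assoc]
  congr 1
  rw [← Finset.prod_filter]
  have h3 : ∀ i ∈ S.filter (fun i => i < x), Nat.gcd (f i) (f x) = Nat.gcd (f x) (f i) :=
    fun i _ => Nat.gcd_comm _ _
  rw [Finset.prod_congr rfl h3]
  have h4 : S.filter (fun i => i < x) = S.filter (fun i => ¬ x < i) := by
    apply Finset.filter_congr
    intro i hi
    have : i ≠ x := fun h => hx (h ▸ hi)
    constructor
    · exact fun h => not_lt_of_gt h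
    · exact fun h => lt_of_le_of_ne (not_lt.mp h) this
  rw [h4, Finset.prod_filter_mul_prod_filter_not]

private lemma prod_eq_lcm_mul_pairs {ι : Type*} [LinearOrder ι] (f : ι → ℕ)
    (hf : ∀ i, f i ≠ 0)
    (htr : ∀ i j k : ι, i ≠ j → j ≠ k → i ≠ k →
      Nat.gcd (Nat.gcd (f i) (f j)) (f k) = 1)
    (S : Finset ι) :
    (∏ j ∈ S, f j) = S.lcm f *
      ∏ i ∈ S, ∏ j ∈ S.filter (fun j => i < j), Nat.gcd (f i) (f j) := by
  induction S using Finset.induction_on with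
  | empty => simp [Finset.lcm_empty]
  | @insert x S hx ih =>
    rw [Finset.prod_insert hx, pair_insert f x S hx, Finset.lcm_insert, lcm_eq_nat_lcm, ih]
    have hgcd : Nat.gcd (f x) (S.lcm f) = ∏ i ∈ S, Nat.gcd (f x) (f i) := by
      apply gcd_finset_lcm (f x) (hf x) S f (fun i _ => hf i)
      intro i hi j hj hij
      have hix : i ≠ x := fun h => hx (h ▸ hi)
      have hjx : j ≠ x := fun h => hx (h ▸ hj)
      have key : Nat.gcd (Nat.gcd (f i) (f j)) (f x) = 1 := htr i j x hij hjx hix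
      have hd : Nat.gcd (Nat.gcd (f x) (f i)) (Nat.gcd (f x) (f j)) ∣
          Nat.gcd (Nat.gcd (f i) (f j)) (f x) := by
        apply Nat.dvd_gcd
        · exact Nat.dvd_gcd ((Nat.gcd_dvd_left _ _).trans (Nat.gcd_dvd_right _ _))
            ((Nat.gcd_dvd_right _ _).trans (Nat.gcd_dvd_right _ _))
        · exact (Nat.gcd_dvd_left _ _).trans (Nat.gcd_dvd_left _ _)
      exact Nat.eq_one_of_dvd_one (key ▸ hd)
    have key2 : f x * S.lcm f = Nat.lcm (f x) (S.lcm f) * Nat.gcd (f x) (S.lcm f) := by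
      rw [mul_comm (Nat.lcm _ _), Nat.gcd_mul_lcm]
    calc f x * (S.lcm f * ∏ i ∈ S, ∏ j ∈ S.filter (fun j => i < j), Nat.gcd (f i) (f j))
        = (f x * S.lcm f) * ∏ i ∈ S, ∏ j ∈ S.filter (fun j => i < j), Nat.gcd (f i) (f j) := by
          ring
      _ = (Nat.lcm (f x) (S.lcm f) * Nat.gcd (f x) (S.lcm f)) *
            ∏ i ∈ S, ∏ j ∈ S.filter (fun j => i < j), Nat.gcd (f i) (f j) := by rw [key2]
      _ = Nat.lcm (f x) (S.lcm f) * ((∏ i ∈ S, Nat.gcd (f x) (f i)) *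
            ∏ i ∈ S, ∏ j ∈ S.filter (fun j => i < j), Nat.gcd (f i) (f j)) := by
          rw [hgcd]; ring

private lemma pairprod_conv {n : ℕ} (S : Finset (Fin n)) (g : Fin n → Fin n → ℕ) :
    (∏ p ∈ (univ : Finset (Fin n × Fin n)).filter
        (fun p => p.1 < p.2 ∧ p.1 ∈ S ∧ p.2 ∈ S), g p.1 p.2)
      = ∏ i ∈ S, ∏ j ∈ S.filter (fun j => i < j), g i j := by
  have hM : ∀ i ∈ S, (univ.filter (fun j => i < j ∧ i ∈ S ∧ j ∈ S)) =
      S.filter (fun j => i < j) := by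
    intro i hi
    ext j
    simp only [Finset.mem_filter, Finset.mem_univ, true_and, hi]
    tauto
  calc (∏ p ∈ (univ : Finset (Fin n × Fin n)).filter
        (fun p => p.1 < p.2 ∧ p.1 ∈ S ∧ p.2 ∈ S), g p.1 p.2)
      = ∏ p ∈ (univ ×ˢ univ : Finset (Fin n × Fin n)),
          (if p.1 < p.2 ∧ p.1 ∈ S ∧ p.2 ∈ S then g p.1 p.2 else 1) := by
        rw [Finset.univ_product_univ, Finset.prod_filter]
    _ = ∏ i, ∏ j, (if i < j ∧ i ∈ S ∧ j ∈ S then g i j else 1) := by rw [Finset.prod_product]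
    _ = ∏ i, ∏ j ∈ univ.filter (fun j => i < j ∧ i ∈ S ∧ j ∈ S), g i j := by
        refine Finset.prod_congr rfl fun i _ => ?_
        rw [Finset.prod_filter]
    _ = ∏ i ∈ S, ∏ j ∈ univ.filter (fun j => i < j ∧ i ∈ S ∧ j ∈ S), g i j := by
        refine (Finset.prod_subset (Finset.subset_univ S) fun i _ hi => ?_).symm
        have : univ.filter (fun j => i < j ∧ i ∈ S ∧ j ∈ S) = ∅ := by
          ext j; simp [hi]
        rw [this, Finset.prod_empty]
    _ = ∏ i ∈ S, ∏ j ∈ S.filter (fun j => i < j), g i j :=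
        Finset.prod_congr rfl fun i hi => by rw [hM i hi]


theorem brieskorn_genus_zero_equation (n : ℕ) (hn : 3 ≤ n) (a : Fin n → ℕ)
    (ha : ∀ i, 2 ≤ a i)
    (htriple : ∀ i j k : Fin n, i ≠ j → j ≠ k → i ≠ k →
      Nat.gcd (Nat.gcd (a i) (a j)) (a k) = 1)
    -- the genus `g = (1/2)(2 + (n-2)·A/a − Σᵢ sᵢ)` vanishes:
    (hg : 2 + ((n : ℚ) - 2) * ((∏ j, a j : ℕ) : ℚ) / ((univ.lcm a : ℕ) : ℚ)
        - ∑ i, ((∏ j ∈ univ.erase i, a j : ℕ) : ℚ) / (((univ.erase i).lcm a : ℕ) : ℚ) = 0) :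
    (2 : ℤ) + ((n : ℤ) - 2) *
        ∏ p ∈ univ.filter (fun p : Fin n × Fin n => p.1 < p.2), (Nat.gcd (a p.1) (a p.2) : ℤ)
      - ∑ j, ∏ p ∈ univ.filter (fun p : Fin n × Fin n => p.1 < p.2 ∧ p.1 ≠ j ∧ p.2 ≠ j),
          (Nat.gcd (a p.1) (a p.2) : ℤ) = 0 := by
  have hane : ∀ i, a i ≠ 0 := fun i => by have := ha i; omega
  -- pair products as naturals
  set P : Finset (Fin n) → ℕ :=
    fun S => ∏ i ∈ S, ∏ j ∈ S.filter (fun j => i < j), Nat.gcd (a i) (a j) with hP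
  have hmain : ∀ S : Finset (Fin n), (∏ j ∈ S, a j) = S.lcm a * P S :=
    prod_eq_lcm_mul_pairs a hane htriple
  -- rewrite the rational hypothesis
  have hlcm_ne : ∀ S : Finset (Fin n), ((S.lcm a : ℕ) : ℚ) ≠ 0 := by
    intro S
    have := finset_lcm_ne_zero S a (fun i _ => hane i)
    exact_mod_cast this
  have hdiv : ∀ S : Finset (Fin n), ((∏ j ∈ S, a j : ℕ) : ℚ) / ((S.lcm a : ℕ) : ℚ) = (P S : ℚ) := by
    intro S
    rw [hmain S]
    push_cast
    rw [mul_comm, mul_div_assoc, div_self (hlcm_ne S), mul_one]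
  have hq : 2 + ((n : ℚ) - 2) * (P univ : ℚ) - ∑ i, (P (univ.erase i) : ℚ) = 0 := by
    rw [← hdiv univ]
    have : ∀ i ∈ (univ : Finset (Fin n)), (P (univ.erase i) : ℚ)
        = ((∏ j ∈ univ.erase i, a j : ℕ) : ℚ) / (((univ.erase i).lcm a : ℕ) : ℚ) :=
      fun i _ => (hdiv _).symm
    rw [Finset.sum_congr rfl this, ← mul_div_assoc]
    exact hg
  -- convert goal products
  have hg1n : (∏ p ∈ univ.filter (fun p : Fin n × Fin n => p.1 < p.2),
      Nat.gcd (a p.1) (a p.2)) = P univ := by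
    refine Eq.trans ?_ (pairprod_conv univ (fun i j => Nat.gcd (a i) (a j)))
    refine Finset.prod_congr ?_ fun p _ => rfl
    apply Finset.filter_congr
    intro p _
    simp
  have hg1 : (∏ p ∈ univ.filter (fun p : Fin n × Fin n => p.1 < p.2),
      (Nat.gcd (a p.1) (a p.2) : ℤ)) = (P univ : ℤ) := by
    rw [← hg1n]
    push_cast
    rfl
  have hg2n : ∀ j : Fin n, (∏ p ∈ univ.filter
      (fun p : Fin n × Fin n => p.1 < p.2 ∧ p.1 ≠ j ∧ p.2 ≠ j),
      Nat.gcd (a p.1) (a p.2)) = P (univ.erase j) := by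
    intro j
    refine Eq.trans ?_ (pairprod_conv (univ.erase j) (fun i k => Nat.gcd (a i) (a k)))
    refine Finset.prod_congr ?_ fun p _ => rfl
    apply Finset.filter_congr
    intro p _
    simp [Finset.mem_erase, and_comm]
  have hg2 : ∀ j : Fin n, (∏ p ∈ univ.filter
      (fun p : Fin n × Fin n => p.1 < p.2 ∧ p.1 ≠ j ∧ p.2 ≠ j),
      (Nat.gcd (a p.1) (a p.2) : ℤ)) = (P (univ.erase j) : ℤ) := by
    intro j
    rw [← hg2n j]
    push_cast
    rfl
  rw [hg1, Finset.sum_congr rfl fun j _ => hg2 j]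
  have : ((2 + ((n : ℤ) - 2) * (P univ : ℤ) - ∑ j, (P (univ.erase j) : ℤ) : ℤ) : ℚ) = 0 := by
    push_cast
    convert hq using 2
  exact_mod_cast this
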